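/- arXiv:1007.1882 — 3 statements merged into one kernel-verified Lean document; each statement's English description precedes it below -/
import Mathlib

section
/- Let K be a closed subset of a normed space U, g : U → ℝ measurable with 0 ≤ g(u) ≤ c(1 + |u|^q) for all u, and g(u) ≥ C|u|^q whenever u ∈ K with |u| ≥ R, for constants c, C, R > 0 and 1 < q ≤ 2. Let R̃ : U → H satisfy |R̃(u)| ≤ c(1 + |u|). Define ψ(z) = inf_{u ∈ K} { g(u) + ⟨z, R̃(u)⟩ }. Then there exists a constant C' > 0 such that ψ(z) ≥ −C'(1 + |z|^p) for all z ∈ H, where p is the conjugate exponent of q. -/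
open scoped RealInnerProductSpace

lemma aux_le_one_add_rpow {p : ℝ} (hp : 1 ≤ p) {t : ℝ} (ht : 0 ≤ t) : t ≤ 1 + t ^ p := by
  rcases le_total t 1 with h | h
  · have := Real.rpow_nonneg ht p; linarith
  · have h1 : t ^ (1 : ℝ) ≤ t ^ p := Real.rpow_le_rpow_of_exponent_le h hp
    rw [Real.rpow_one] at h1; linarith

/-- Lower bound for the Hamiltonian `ψ(z) = inf_{u ∈ K} { g(u) + ⟪z, R̃(u)⟫ }`:
there is `C' > 0` with `ψ(z) ≥ -C'(1 + ‖z‖^p)`. -/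
theorem stmt1 {U H : Type*} [NormedAddCommGroup U] [NormedSpace ℝ U] [MeasurableSpace U]
    [BorelSpace U] [NormedAddCommGroup H] [InnerProductSpace ℝ H]
    (K : Set U) (hKclosed : IsClosed K) (hKne : K.Nonempty)
    (g : U → ℝ) (hgmeas : Measurable g)
    (Rt : U → H) (c C R q p : ℝ) (hc : 0 < c) (hC : 0 < C) (hR : 0 < R)
    (hq1 : 1 < q) (hq2 : q ≤ 2) (hp : p = q / (q - 1))
    (hg0 : ∀ u, 0 ≤ g u) (hgup : ∀ u, g u ≤ c * (1 + ‖u‖ ^ q))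
    (hcoer : ∀ u ∈ K, R ≤ ‖u‖ → C * ‖u‖ ^ q ≤ g u)
    (hRt : ∀ u, ‖Rt u‖ ≤ c * (1 + ‖u‖)) :
    ∃ C' > 0, ∀ z : H,
      -C' * (1 + ‖z‖ ^ p) ≤ sInf ((fun u => g u + ⟪z, Rt u⟫) '' K) := by
  have hqp : q.HolderConjugate p := (Real.holderConjugate_iff_eq_conjExponent hq1).2 hp
  have hpq : p.HolderConjugate q := hqp.symm
  have hp1 : 1 < p := hpq.lt
  have hqC : (0 : ℝ) < q * C := mul_pos (by linarith) hC
  set ε : ℝ := (q * C) ^ (q⁻¹) with hε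
  have hεpos : 0 < ε := Real.rpow_pos_of_pos hqC _
  have hεq : ε ^ q = q * C := by
    rw [hε, ← Real.rpow_mul hqC.le, inv_mul_cancel₀ (by positivity : q ≠ 0), Real.rpow_one]
  have hA : (0 : ℝ) < (c / ε) ^ p / p := by positivity
  refine ⟨c * (1 + R) + c + (c / ε) ^ p / p, by positivity, fun z => ?_⟩
  set C' : ℝ := c * (1 + R) + c + (c / ε) ^ p / p with hC'
  have hzp : (0 : ℝ) ≤ ‖z‖ ^ p := Real.rpow_nonneg (norm_nonneg z) p
  have hzle : ‖z‖ ≤ 1 + ‖z‖ ^ p := aux_le_one_add_rpow hp1.le (norm_nonneg z)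
  apply le_csInf (hKne.image _)
  rintro b ⟨u, huK, rfl⟩
  simp only
  set t : ℝ := ‖u‖ with ht
  have ht0 : 0 ≤ t := norm_nonneg u
  -- lower bound on the inner product
  have hinner : -(c * ‖z‖ + c * ‖z‖ * t) ≤ ⟪z, Rt u⟫ := by
    have h1 : |⟪z, Rt u⟫| ≤ ‖z‖ * ‖Rt u‖ := abs_real_inner_le_norm z (Rt u)
    have h2 : ‖z‖ * ‖Rt u‖ ≤ ‖z‖ * (c * (1 + t)) :=
      mul_le_mul_of_nonneg_left (hRt u) (norm_nonneg z)
    have h3 : -⟪z, Rt u⟫ ≤ ‖z‖ * (c * (1 + t)) := by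
      have := neg_abs_le ⟪z, Rt u⟫; linarith
    nlinarith [norm_nonneg z]
  rcases le_total t R with hcase | hcase
  · -- small u
    have hgz := hg0 u
    have h1 : c * ‖z‖ * t ≤ c * ‖z‖ * R :=
      mul_le_mul_of_nonneg_left hcase (by positivity)
    have h2 : c * (1 + R) * ‖z‖ ≤ c * (1 + R) * (1 + ‖z‖ ^ p) :=
      mul_le_mul_of_nonneg_left hzle (by positivity)
    have h3 : 0 ≤ (c + (c / ε) ^ p / p) * (1 + ‖z‖ ^ p) := by positivity
    rw [hC']; nlinarith
  · -- large u : use coercivity and Young's inequality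
    have hgl : C * t ^ q ≤ g u := hcoer u huK hcase
    have hyoung : (c * ‖z‖ / ε) * (ε * t) ≤
        (c * ‖z‖ / ε) ^ p / p + (ε * t) ^ q / q :=
      Real.young_inequality_of_nonneg (by positivity) (by positivity) hpq
    have e1 : (c * ‖z‖ / ε) * (ε * t) = c * ‖z‖ * t := by
      field_simp
    have e2 : (c * ‖z‖ / ε) ^ p = (c / ε) ^ p * ‖z‖ ^ p := by
      rw [show c * ‖z‖ / ε = (c / ε) * ‖z‖ by ring,
        Real.mul_rpow (by positivity) (norm_nonneg z)]
    have e3 : (ε * t) ^ q / q = C * t ^ q := by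
      rw [Real.mul_rpow hεpos.le ht0, hεq]
      field_simp
    rw [e1, e2, e3] at hyoung
    -- combine
    have h2 : c * ‖z‖ ≤ c * (1 + ‖z‖ ^ p) := mul_le_mul_of_nonneg_left hzle hc.le
    have h3 : 0 ≤ c * (1 + R) * (1 + ‖z‖ ^ p) := by positivity
    have h4 : (c / ε) ^ p / p * ‖z‖ ^ p ≤ (c / ε) ^ p / p * (1 + ‖z‖ ^ p) := by
      nlinarith
    have heq : (c / ε) ^ p * ‖z‖ ^ p / p = (c / ε) ^ p / p * ‖z‖ ^ p := by ring
    rw [heq] at hyoung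
    rw [hC']; nlinarith [hinner, hgl]
end

section
/- Under the same hypotheses as in the lower bound lemma (g satisfies 0 ≤ g(u) ≤ c(1+|u|^q) and coercivity g(u) ≥ C|u|^q for |u| ≥ R on K, and |R̃(u)| ≤ c(1+|u|)), there exists a constant C̄ > 0 such that for every z ∈ H, inf_{u ∈ K} { g(u) + ⟨z, R̃(u)⟩ } = inf_{u ∈ K, |u| ≤ C̄(1+|z|^{p−1})} { g(u) + ⟨z, R̃(u)⟩ }; i.e. the infimum defining the Hamiltonian is effectively attained within a ball of radius C̄(1+|z|^{p−1}). -/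
open scoped RealInnerProductSpace

set_option maxHeartbeats 1600000 in
/-- The infimum defining the Hamiltonian is effectively attained within a ball of
radius `C̄(1 + ‖z‖^{p-1})`. -/
theorem stmt2 {U H : Type*} [NormedAddCommGroup U] [NormedSpace ℝ U] [MeasurableSpace U]
    [BorelSpace U] [NormedAddCommGroup H] [InnerProductSpace ℝ H]
    (K : Set U) (hKclosed : IsClosed K) (u0 : U) (hu0 : u0 ∈ K)
    (g : U → ℝ) (hgmeas : Measurable g)
    (Rt : U → H) (c C R q p : ℝ) (hc : 0 < c) (hC : 0 < C) (hR : 0 < R)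
    (hq1 : 1 < q) (hq2 : q ≤ 2) (hp : p = q / (q - 1))
    (hg0 : ∀ u, 0 ≤ g u) (hgup : ∀ u, g u ≤ c * (1 + ‖u‖ ^ q))
    (hcoer : ∀ u ∈ K, R ≤ ‖u‖ → C * ‖u‖ ^ q ≤ g u)
    (hRt : ∀ u, ‖Rt u‖ ≤ c * (1 + ‖u‖)) :
    ∃ Cbar > 0, ∀ z : H,
      sInf ((fun u => g u + ⟪z, Rt u⟫) '' K) =
        sInf ((fun u => g u + ⟪z, Rt u⟫) ''
          {u ∈ K | ‖u‖ ≤ Cbar * (1 + ‖z‖ ^ (p - 1))}) := by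

  have hq1' : 0 < q - 1 := by linarith
  have hpm : (p - 1) * (q - 1) = 1 := by
    rw [hp]; field_simp; ring
  set A : ℝ := g u0 + c * (1 + ‖u0‖) + 2 * c with hA
  have hApos : 0 < A := by
    have h1 := hg0 u0
    have h0 : (0:ℝ) ≤ ‖u0‖ := norm_nonneg _
    nlinarith
  set Cbar : ℝ := max (max 1 R) (max ‖u0‖ ((max (A / C) 1) ^ (p - 1))) with hCbar
  have hCbar1 : (1:ℝ) ≤ Cbar := le_trans (le_max_left 1 R) (le_max_left _ _)
  have hCbarpos : 0 < Cbar := lt_of_lt_of_le one_pos hCbar1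
  have hCbarR : R ≤ Cbar := le_trans (le_max_right 1 R) (le_max_left _ _)
  have hCbaru0 : ‖u0‖ ≤ Cbar := le_trans (le_max_left _ _) (le_max_right _ _)
  have hCbarA : A ≤ C * Cbar ^ (q - 1) := by
    have h1 : (max (A / C) 1) ^ (p - 1) ≤ Cbar :=
      le_trans (le_max_right _ _) (le_max_right _ _)
    have hm : (0:ℝ) ≤ max (A / C) 1 := le_trans zero_le_one (le_max_right _ _)
    have h2 : ((max (A / C) 1) ^ (p - 1)) ^ (q - 1) ≤ Cbar ^ (q - 1) :=
      Real.rpow_le_rpow (Real.rpow_nonneg hm _) h1 (le_of_lt hq1')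
    rw [← Real.rpow_mul hm, hpm, Real.rpow_one] at h2
    have h3 : A / C ≤ Cbar ^ (q - 1) := le_trans (le_max_left _ _) h2
    have h4 : A = C * (A / C) := by field_simp
    rw [h4]
    exact mul_le_mul_of_nonneg_left h3 hC.le
  refine ⟨Cbar, hCbarpos, fun z => ?_⟩
  set f : U → ℝ := fun u => g u + ⟪z, Rt u⟫ with hf
  set s : ℝ := ‖z‖ with hsdef
  have hs : 0 ≤ s := norm_nonneg z
  have hsp : 0 ≤ s ^ (p - 1) := Real.rpow_nonneg hs _
  set T : ℝ := Cbar * (1 + s ^ (p - 1)) with hT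
  have hTC : Cbar ≤ T := by nlinarith
  have hCq : 0 < Cbar ^ (q - 1) := Real.rpow_pos_of_pos hCbarpos _
  -- key lemma: outside the ball, f u ≥ f u0
  have key : ∀ u ∈ K, T < ‖u‖ → f u0 ≤ f u := by
    intro u hu htu
    set t : ℝ := ‖u‖ with htdef
    have ht1 : 1 ≤ t := le_trans hCbar1 (le_of_lt (lt_of_le_of_lt hTC htu))
    have htpos : 0 < t := lt_of_lt_of_le one_pos ht1
    have htR : R ≤ t := le_trans hCbarR (le_of_lt (lt_of_le_of_lt hTC htu))
    have hgl : C * t ^ q ≤ g u := hcoer u hu htR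
    have hst : s * Cbar ^ (q - 1) ≤ t ^ (q - 1) := by
      have h1 : s ^ (p - 1) ≤ t / Cbar := by
        rw [le_div_iff₀ hCbarpos]
        nlinarith
      have h2 : (s ^ (p - 1)) ^ (q - 1) ≤ (t / Cbar) ^ (q - 1) :=
        Real.rpow_le_rpow hsp h1 (le_of_lt hq1')
      rw [← Real.rpow_mul hs, hpm, Real.rpow_one,
        Real.div_rpow htpos.le hCbarpos.le] at h2
      exact (le_div_iff₀ hCq).mp h2
    have htq0 : 0 < t ^ q := Real.rpow_pos_of_pos htpos _
    have htqq : t ^ (q - 1) ≤ t ^ q :=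
      Real.rpow_le_rpow_of_exponent_le ht1 (by linarith)
    have hmulq : t ^ (q - 1) * t = t ^ q := by
      rw [← Real.rpow_add_one (ne_of_gt htpos) (q - 1)]
      norm_num
    have hD1 : Cbar ^ (q - 1) ≤ t ^ q := by
      calc Cbar ^ (q - 1) ≤ t ^ (q - 1) :=
            Real.rpow_le_rpow hCbarpos.le (le_trans hTC htu.le) (le_of_lt hq1')
        _ ≤ t ^ q := htqq
    have hs1 : s * Cbar ^ (q - 1) ≤ t ^ q := le_trans hst htqq
    have hs2 : s * t * Cbar ^ (q - 1) ≤ t ^ q := by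
      nlinarith
    have hi0 : ⟪z, Rt u0⟫ ≤ s * (c * (1 + ‖u0‖)) :=
      le_trans (real_inner_le_norm z (Rt u0)) (mul_le_mul_of_nonneg_left (hRt u0) hs)
    have hiu : -(s * (c * (1 + t))) ≤ ⟪z, Rt u⟫ := by
      have h1 := abs_real_inner_le_norm z (Rt u)
      have h2 : ‖z‖ * ‖Rt u‖ ≤ s * (c * (1 + t)) :=
        mul_le_mul_of_nonneg_left (hRt u) hs
      have h3 := neg_abs_le ⟪z, Rt u⟫
      nlinarith
    have hmain : (g u0 + s * (c * (1 + ‖u0‖)) + s * (c * (1 + t))) * Cbar ^ (q - 1)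
        ≤ (C * t ^ q) * Cbar ^ (q - 1) := by
      have e1 : g u0 * Cbar ^ (q - 1) ≤ g u0 * t ^ q :=
        mul_le_mul_of_nonneg_left hD1 (hg0 u0)
      have e2 : (c * (1 + ‖u0‖)) * (s * Cbar ^ (q - 1)) ≤ (c * (1 + ‖u0‖)) * t ^ q :=
        mul_le_mul_of_nonneg_left hs1 (by positivity)
      have e3 : c * (s * Cbar ^ (q - 1)) ≤ c * t ^ q :=
        mul_le_mul_of_nonneg_left hs1 hc.le
      have e4 : c * (s * t * Cbar ^ (q - 1)) ≤ c * t ^ q :=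
        mul_le_mul_of_nonneg_left hs2 hc.le
      have e5 : A * t ^ q ≤ (C * Cbar ^ (q - 1)) * t ^ q :=
        mul_le_mul_of_nonneg_right hCbarA htq0.le
      rw [hA] at e5
      ring_nf at e1 e2 e3 e4 e5 ⊢
      linarith
    have hfin : g u0 + s * (c * (1 + ‖u0‖)) + s * (c * (1 + t)) ≤ C * t ^ q :=
      le_of_mul_le_mul_right hmain hCq
    show g u0 + ⟪z, Rt u0⟫ ≤ g u + ⟪z, Rt u⟫
    linarith
  have hu0B : u0 ∈ {u ∈ K | ‖u‖ ≤ T} := ⟨hu0, le_trans hCbaru0 hTC⟩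
  have hBne : (f '' {u ∈ K | ‖u‖ ≤ T}).Nonempty := ⟨f u0, u0, hu0B, rfl⟩
  have hAne : (f '' K).Nonempty := ⟨f u0, u0, hu0, rfl⟩
  set B0 : ℝ := -(s * (c * (1 + T))) with hB0
  have hbdd : ∀ u ∈ K, ‖u‖ ≤ T → B0 ≤ f u := by
    intro u hu huT
    have h1 := abs_real_inner_le_norm z (Rt u)
    have h2 : ‖z‖ * ‖Rt u‖ ≤ s * (c * (1 + ‖u‖)) :=
      mul_le_mul_of_nonneg_left (hRt u) hs
    have h3 := neg_abs_le ⟪z, Rt u⟫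
    have h4 := hg0 u
    have h5 : s * (c * (1 + ‖u‖)) ≤ s * (c * (1 + T)) := by
      have h6 : c * (1 + ‖u‖) ≤ c * (1 + T) :=
        mul_le_mul_of_nonneg_left (by linarith) hc.le
      exact mul_le_mul_of_nonneg_left h6 hs
    show B0 ≤ g u + ⟪z, Rt u⟫
    rw [hB0]
    linarith
  have hbddK : ∀ u ∈ K, B0 ≤ f u := by
    intro u hu
    by_cases h : ‖u‖ ≤ T
    · exact hbdd u hu h
    · have h1 := key u hu (lt_of_not_ge h)
      have h0 : B0 ≤ f u0 := hbdd u0 hu0 (le_trans hCbaru0 hTC)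
      linarith
  have hbddA : BddBelow (f '' K) := by
    refine ⟨B0, ?_⟩
    rintro x ⟨u, hu, rfl⟩
    exact hbddK u hu
  have hbddB : BddBelow (f '' {u ∈ K | ‖u‖ ≤ T}) :=
    hbddA.mono (Set.image_mono (f := f) (fun u hu => hu.1))
  apply le_antisymm
  · exact csInf_le_csInf hbddA hBne (Set.image_mono (f := f) (fun u hu => hu.1))
  · apply le_csInf hAne
    rintro b ⟨u, hu, rfl⟩
    by_cases h : ‖u‖ ≤ T
    · exact csInf_le hbddB ⟨u, ⟨hu, h⟩, rfl⟩
    · have hk := key u hu (lt_of_not_ge h)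
      have h2 : sInf (f '' {u ∈ K | ‖u‖ ≤ T}) ≤ f u0 := csInf_le hbddB ⟨u0, hu0B, rfl⟩
      linarith
end

section
/- Let ψ : H → ℝ be defined as ψ(z) = inf_{u ∈ K} { g(u) + ⟨z, R̃(u)⟩ } under the hypotheses guaranteeing the infimum localizes in a ball of radius C(1+|z|^{p−1}). Then ψ is locally Lipschitz with the quantitative bound |ψ(z₁) − ψ(z₂)| ≤ C'(1 + |z₁|^{p−1} + |z₂|^{p−1}) |z₁ − z₂| for all z₁, z₂ ∈ H. -/
open scoped RealInnerProductSpace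

set_option maxHeartbeats 1000000

/-- The Hamiltonian `ψ(z) = inf_{u ∈ K} { g(u) + ⟪z, R̃(u)⟫ }` is locally Lipschitz with
the quantitative bound `|ψ(z₁) - ψ(z₂)| ≤ C'(1 + ‖z₁‖^{p-1} + ‖z₂‖^{p-1})‖z₁ - z₂‖`. -/
theorem stmt3 {U H : Type*} [NormedAddCommGroup U] [NormedSpace ℝ U] [MeasurableSpace U]
    [BorelSpace U] [NormedAddCommGroup H] [InnerProductSpace ℝ H]
    (K : Set U) (hKclosed : IsClosed K) (hKne : K.Nonempty)
    (g : U → ℝ) (hgmeas : Measurable g)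
    (Rt : U → H) (c C R q p : ℝ) (hc : 0 < c) (hC : 0 < C) (hR : 0 < R)
    (hq1 : 1 < q) (hq2 : q ≤ 2) (hp : p = q / (q - 1))
    (hg0 : ∀ u, 0 ≤ g u) (hgup : ∀ u, g u ≤ c * (1 + ‖u‖ ^ q))
    (hcoer : ∀ u ∈ K, R ≤ ‖u‖ → C * ‖u‖ ^ q ≤ g u)
    (hRt : ∀ u, ‖Rt u‖ ≤ c * (1 + ‖u‖)) :
    ∃ C' > 0, ∀ z₁ z₂ : H,
      |sInf ((fun u => g u + ⟪z₁, Rt u⟫) '' K) -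
        sInf ((fun u => g u + ⟪z₂, Rt u⟫) '' K)|
        ≤ C' * (1 + ‖z₁‖ ^ (p - 1) + ‖z₂‖ ^ (p - 1)) * ‖z₁ - z₂‖ := by
  obtain ⟨u₀, hu₀⟩ := hKne
  have hq0 : 0 < q - 1 := by linarith
  have hp1 : p - 1 = 1 / (q - 1) := by
    rw [hp]; field_simp; ring
  have hp1pos : 0 < p - 1 := by rw [hp1]; positivity
  have hpq : (p - 1) * (q - 1) = 1 := by rw [hp1]; field_simp
  -- inner product bound
  have hinner : ∀ (z : H) (u : U), |⟪z, Rt u⟫| ≤ ‖z‖ * (c * (1 + ‖u‖)) := by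
    intro z u
    refine le_trans (abs_real_inner_le_norm z (Rt u)) ?_
    exact mul_le_mul_of_nonneg_left (hRt u) (norm_nonneg z)
  -- bounded below
  have hbdd : ∀ z : H, BddBelow ((fun u => g u + ⟪z, Rt u⟫) '' K) := by
    intro z
    set T : ℝ := max (max R 1) ((2 * c * ‖z‖ / C) ^ (p - 1)) with hT
    have hT1 : (1 : ℝ) ≤ T := le_trans (le_max_right R 1) (le_max_left _ _)
    refine ⟨-(c * ‖z‖ * (1 + T)), ?_⟩
    rintro x ⟨u, huK, rfl⟩
    have hi := hinner z u
    have hi1 : -(‖z‖ * (c * (1 + ‖u‖))) ≤ ⟪z, Rt u⟫ := by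
      have := neg_abs_le (⟪z, Rt u⟫ : ℝ); linarith
    by_cases hu : ‖u‖ ≤ T
    · have hg := hg0 u
      have h0 : ‖z‖ * (c * (1 + ‖u‖)) ≤ c * ‖z‖ * (1 + T) := by
        nlinarith [mul_nonneg (mul_nonneg hc.le (norm_nonneg z)) (sub_nonneg.mpr hu)]
      simp only
      linarith
    · push_neg at hu
      have h1 : (1 : ℝ) ≤ ‖u‖ := le_trans hT1 hu.le
      have hRu : R ≤ ‖u‖ := le_trans (le_trans (le_max_left R 1) (le_max_left _ _)) hu.le
      have hgl := hcoer u huK hRu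
      have hb0 : 0 ≤ 2 * c * ‖z‖ / C := by positivity
      have h2 : (2 * c * ‖z‖ / C) ^ (p - 1) ≤ ‖u‖ := le_trans (le_max_right _ _) hu.le
      have h3 : 2 * c * ‖z‖ / C ≤ ‖u‖ ^ (q - 1) := by
        have := Real.rpow_le_rpow (Real.rpow_nonneg hb0 _) h2 hq0.le
        rwa [← Real.rpow_mul hb0, hpq, Real.rpow_one] at this
      have hupos : (0:ℝ) < ‖u‖ := by linarith
      have h4 : ‖u‖ ^ (q - 1) * ‖u‖ = ‖u‖ ^ q := by
        rw [Real.rpow_sub hupos, Real.rpow_one, div_mul_cancel₀ _ (ne_of_gt hupos)]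
      have h5 : 2 * c * ‖z‖ * ‖u‖ ≤ C * ‖u‖ ^ q := by
        rw [← h4]
        have := mul_le_mul_of_nonneg_right h3 (le_trans zero_le_one h1)
        calc 2 * c * ‖z‖ * ‖u‖ = C * (2 * c * ‖z‖ / C) * ‖u‖ := by field_simp
          _ ≤ C * ‖u‖ ^ (q - 1) * ‖u‖ := by nlinarith
          _ = C * (‖u‖ ^ (q - 1) * ‖u‖) := by ring
      have hnz : (0:ℝ) ≤ ‖z‖ := norm_nonneg z
      have hgu : 0 ≤ g u + ⟪z, Rt u⟫ := by
        nlinarith [mul_nonneg (mul_nonneg hc.le hnz) (by linarith : (0:ℝ) ≤ ‖u‖ - 1)]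
      have hTn : (0:ℝ) ≤ 1 + T := by linarith
      simp only
      nlinarith [mul_nonneg (mul_nonneg hc.le hnz) hTn]
  -- constants
  set A : ℝ := c * (1 + ‖u₀‖ ^ q) + c * (1 + ‖u₀‖) + 1 with hA
  have hu0q : 0 ≤ ‖u₀‖ ^ q := Real.rpow_nonneg (norm_nonneg _) _
  have hApos : 0 < A := by positivity
  set E : ℝ := (A + 2 * c) / C with hE
  have hEpos : 0 < E := by positivity
  set F : ℝ := 1 + max R 1 + E ^ (p - 1) * 2 ^ (p - 1) with hF
  have hmR : (1:ℝ) ≤ max R 1 := le_max_right R 1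
  have hEp : 0 ≤ E ^ (p - 1) * 2 ^ (p - 1) :=
    mul_nonneg (Real.rpow_nonneg hEpos.le _) (Real.rpow_nonneg two_pos.le _)
  have hFpos : 0 < F := by rw [hF]; nlinarith
  -- localization lemma
  have hloc : ∀ (z : H) (u : U), u ∈ K →
      g u + ⟪z, Rt u⟫ ≤ (g u₀ + ⟪z, Rt u₀⟫) + 1 →
      1 + ‖u‖ ≤ F * (1 + ‖z‖ ^ (p - 1)) := by
    intro z u huK hub
    have hzp : 0 ≤ ‖z‖ ^ (p - 1) := Real.rpow_nonneg (norm_nonneg z) _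
    by_cases hu : ‖u‖ ≤ max R 1
    · have : 1 + ‖u‖ ≤ F := by rw [hF]; nlinarith
      nlinarith
    · push_neg at hu
      have h1 : (1 : ℝ) ≤ ‖u‖ := le_trans (le_max_right R 1) hu.le
      have hRu : R ≤ ‖u‖ := le_trans (le_max_left R 1) hu.le
      have hgl := hcoer u huK hRu
      have hi := hinner z u
      have hi0 := hinner z u₀
      have hnz : (0:ℝ) ≤ ‖z‖ := norm_nonneg z
      -- upper bound on C‖u‖^q
      have hBz : g u₀ + ⟪z, Rt u₀⟫ + 1 ≤ A * (1 + ‖z‖) := by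
        have h01 := hgup u₀
        have := le_abs_self (⟪z, Rt u₀⟫ : ℝ)
        rw [hA]
        nlinarith [mul_nonneg hnz (by positivity : (0:ℝ) ≤ c * (1 + ‖u₀‖ ^ q) + 1), hg0 u₀,
          mul_nonneg hc.le (norm_nonneg u₀), mul_nonneg hc.le hu0q]
      have hq5 : C * ‖u‖ ^ q ≤ (A + 2 * c) * (1 + ‖z‖) * ‖u‖ := by
        have h2 : -(‖z‖ * (c * (1 + ‖u‖))) ≤ ⟪z, Rt u⟫ := by
          have := neg_abs_le (⟪z, Rt u⟫ : ℝ); linarith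
        nlinarith [mul_nonneg (mul_nonneg hApos.le (by positivity : (0:ℝ) ≤ 1 + ‖z‖)) (by linarith : (0:ℝ) ≤ ‖u‖ - 1),
          mul_nonneg (mul_nonneg hc.le hnz) (by linarith : (0:ℝ) ≤ ‖u‖ - 1),
          mul_nonneg hc.le (norm_nonneg u)]
      have hupos : (0:ℝ) < ‖u‖ := by linarith
      have h4 : ‖u‖ ^ (q - 1) * ‖u‖ = ‖u‖ ^ q := by
        rw [Real.rpow_sub hupos, Real.rpow_one, div_mul_cancel₀ _ (ne_of_gt hupos)]
      have h6 : ‖u‖ ^ (q - 1) ≤ E * (1 + ‖z‖) := by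
        rw [← h4] at hq5
        have h7 : C * ‖u‖ ^ (q - 1) ≤ (A + 2 * c) * (1 + ‖z‖) := by
          have := (mul_le_mul_iff_of_pos_right hupos).mp (by nlinarith : C * ‖u‖ ^ (q - 1) * ‖u‖ ≤ (A + 2 * c) * (1 + ‖z‖) * ‖u‖)
          linarith
        rw [hE]
        rw [div_mul_eq_mul_div, le_div_iff₀ hC]
        nlinarith
      have h8 : ‖u‖ ≤ (E * (1 + ‖z‖)) ^ (p - 1) := by
        have h9 := Real.rpow_le_rpow (Real.rpow_nonneg (norm_nonneg u) _) h6 hp1pos.le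
        have hqp : (q - 1) * (p - 1) = 1 := by rw [mul_comm]; exact hpq
        have h10 : (‖u‖ ^ (q - 1)) ^ (p - 1) = ‖u‖ := by
          rw [← Real.rpow_mul (norm_nonneg u), hqp, Real.rpow_one]
        rwa [h10] at h9
      have h11 : (E * (1 + ‖z‖)) ^ (p - 1) = E ^ (p - 1) * (1 + ‖z‖) ^ (p - 1) :=
        Real.mul_rpow hEpos.le (by positivity)
      have h12 : (1 + ‖z‖) ^ (p - 1) ≤ 2 ^ (p - 1) * (1 + ‖z‖ ^ (p - 1)) := by
        by_cases hz1 : ‖z‖ ≤ 1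
        · have : (1 + ‖z‖) ^ (p - 1) ≤ (2:ℝ) ^ (p - 1) :=
            Real.rpow_le_rpow (by positivity) (by linarith) hp1pos.le
          nlinarith [Real.rpow_pos_of_pos (two_pos : (0:ℝ) < 2) (p - 1)]
        · push_neg at hz1
          have : (1 + ‖z‖) ^ (p - 1) ≤ (2 * ‖z‖) ^ (p - 1) :=
            Real.rpow_le_rpow (by positivity) (by linarith) hp1pos.le
          rw [Real.mul_rpow two_pos.le hnz] at this
          nlinarith [Real.rpow_pos_of_pos (two_pos : (0:ℝ) < 2) (p - 1)]
      have hEpn : 0 ≤ E ^ (p - 1) := Real.rpow_nonneg hEpos.le _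
      have h13 : ‖u‖ ≤ E ^ (p - 1) * 2 ^ (p - 1) * (1 + ‖z‖ ^ (p - 1)) := by
        rw [h11] at h8
        nlinarith
      rw [hF]
      nlinarith
  -- key comparison
  have hkey : ∀ z₁ z₂ : H, sInf ((fun u => g u + ⟪z₁, Rt u⟫) '' K)
      ≤ sInf ((fun u => g u + ⟪z₂, Rt u⟫) '' K) + c * F * (1 + ‖z₂‖ ^ (p - 1)) * ‖z₁ - z₂‖ := by
    intro z₁ z₂
    refine le_of_forall_pos_le_add ?_
    intro ε hε
    have hne₂ : ((fun u => g u + ⟪z₂, Rt u⟫) '' K).Nonempty :=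
      ⟨_, Set.mem_image_of_mem _ hu₀⟩
    have hε' : 0 < min ε 1 := lt_min hε one_pos
    obtain ⟨x, hx, hxlt⟩ := Real.lt_sInf_add_pos hne₂ hε'
    obtain ⟨u, huK, rfl⟩ := hx
    have hsle : sInf ((fun u => g u + ⟪z₂, Rt u⟫) '' K) ≤ g u₀ + ⟪z₂, Rt u₀⟫ :=
      csInf_le (hbdd z₂) (Set.mem_image_of_mem _ hu₀)
    have hub : g u + ⟪z₂, Rt u⟫ ≤ (g u₀ + ⟪z₂, Rt u₀⟫) + 1 := by
      have h1 : min ε 1 ≤ 1 := min_le_right _ _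
      simp only at hxlt ⊢
      linarith
    have hloc' := hloc z₂ u huK hub
    have h1 : sInf ((fun u => g u + ⟪z₁, Rt u⟫) '' K) ≤ g u + ⟪z₁, Rt u⟫ :=
      csInf_le (hbdd z₁) (Set.mem_image_of_mem _ huK)
    have h2 : ⟪z₁, Rt u⟫ - ⟪z₂, Rt u⟫ ≤ ‖z₁ - z₂‖ * (c * (1 + ‖u‖)) := by
      rw [← inner_sub_left]
      exact le_trans (le_abs_self _) (hinner _ _)
    have h3 : ‖z₁ - z₂‖ * (c * (1 + ‖u‖)) ≤ c * F * (1 + ‖z₂‖ ^ (p - 1)) * ‖z₁ - z₂‖ := by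
      nlinarith [mul_nonneg (mul_nonneg hc.le (norm_nonneg (z₁ - z₂))) (sub_nonneg.mpr hloc')]
    have h4 : min ε 1 ≤ ε := min_le_left _ _
    simp only at hxlt
    linarith
  refine ⟨c * F, by positivity, ?_⟩
  intro z₁ z₂
  have k12 := hkey z₁ z₂
  have k21 := hkey z₂ z₁
  have hn : ‖z₂ - z₁‖ = ‖z₁ - z₂‖ := norm_sub_rev z₂ z₁
  rw [hn] at k21
  have hz1 : 0 ≤ ‖z₁‖ ^ (p - 1) := Real.rpow_nonneg (norm_nonneg z₁) _
  have hz2 : 0 ≤ ‖z₂‖ ^ (p - 1) := Real.rpow_nonneg (norm_nonneg z₂) _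
  have hd : 0 ≤ ‖z₁ - z₂‖ := norm_nonneg _
  have e0 : (0:ℝ) ≤ c * F := mul_nonneg hc.le hFpos.le
  have e1 : c * F * (1 + ‖z₂‖ ^ (p - 1)) * ‖z₁ - z₂‖
      ≤ c * F * (1 + ‖z₁‖ ^ (p - 1) + ‖z₂‖ ^ (p - 1)) * ‖z₁ - z₂‖ :=
    mul_le_mul_of_nonneg_right (mul_le_mul_of_nonneg_left (by linarith) e0) hd
  have e2 : c * F * (1 + ‖z₁‖ ^ (p - 1)) * ‖z₁ - z₂‖
      ≤ c * F * (1 + ‖z₁‖ ^ (p - 1) + ‖z₂‖ ^ (p - 1)) * ‖z₁ - z₂‖ :=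
    mul_le_mul_of_nonneg_right (mul_le_mul_of_nonneg_left (by linarith) e0) hd
  rw [abs_le]
  constructor
  · linarith
  · linarith
end
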